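/- Let (C, N, (A_i)_{i∈N}, k) be an approval election with n = |N| and k ≥ 1, and let W ⊆ C be a committee with |W| = k. Suppose W fails Droop-EJR+, i.e., there exist ℓ ∈ {1,...,k}, a group S ⊆ N with |S| > ℓ·n/(k+1), and a candidate c ∈ (⋂_{i∈S} A_i) \ W such that |A_i ∩ W| ≤ ℓ − 1 for every i ∈ S. Then there exists w ∈ W such that pavscore((W \ {w}) ∪ {c}) ≥ pavscore(W) + 1/k². -/

import Mathlib

/-- The PAV score of a committee `W`:  `Σ_{i∈N} Σ_{j=1}^{|A_i ∩ W|} 1/j`. -/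
def pavscore {V K : Type*} [DecidableEq K] (N : Finset V) (A : V → Finset K)
    (W : Finset K) : ℚ :=
  ∑ i ∈ N, ∑ j ∈ Finset.Icc 1 (A i ∩ W).card, (1 : ℚ) / (j : ℚ)

/-- Harmonic number as a finite sum. -/
def Hh (m : ℕ) : ℚ := ∑ j ∈ Finset.Icc 1 m, (1 : ℚ) / (j : ℚ)

lemma Hh_succ (m : ℕ) : Hh (m + 1) = Hh m + 1 / ((m : ℚ) + 1) := by
  unfold Hh
  rw [Finset.sum_Icc_succ_top (by omega)]
  push_cast; ring

lemma Hh_mono {a b : ℕ} (h : a ≤ b) : Hh a ≤ Hh b := by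
  unfold Hh
  apply Finset.sum_le_sum_of_subset_of_nonneg
  · exact Finset.Icc_subset_Icc_right h
  · intro j _ _; positivity

lemma pavscore_eq {V K : Type*} [DecidableEq K] (N : Finset V) (A : V → Finset K)
    (W : Finset K) : pavscore N A W = ∑ i ∈ N, Hh ((A i ∩ W).card) := rfl

lemma inter_swap {K : Type*} [DecidableEq K] (Ai W : Finset K) (c w : K) (hc : c ∈ Ai) :
    Ai ∩ insert c (W.erase w) = insert c ((Ai ∩ W).erase w) := by
  rw [Finset.inter_insert_of_mem hc, Finset.inter_erase]

lemma inter_swap' {K : Type*} [DecidableEq K] (Ai W : Finset K) (c w : K) (hc : c ∉ Ai) :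
    Ai ∩ insert c (W.erase w) = (Ai ∩ W).erase w := by
  rw [Finset.inter_insert_of_notMem hc, Finset.inter_erase]

/-- Exact computation of the swap-sum for a voter approving `c`. -/
lemma sum_swap_eq {K : Type*} [DecidableEq K] (Ai W : Finset K) (c : K)
    (hcW : c ∉ W) (hc : c ∈ Ai) :
    ∑ w ∈ W, Hh ((Ai ∩ insert c (W.erase w)).card)
      = (W.card : ℚ) * Hh ((Ai ∩ W).card)
        + ((W.card : ℚ) - ((Ai ∩ W).card : ℚ)) / (((Ai ∩ W).card : ℚ) + 1) := by
  classical
  set m := (Ai ∩ W).card with hm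
  have hcAW : c ∉ (Ai ∩ W) := fun h => hcW (Finset.mem_inter.mp h).2
  have hcard : ∀ w ∈ W, (Ai ∩ insert c (W.erase w)).card
      = ((Ai ∩ W).erase w).card + 1 := by
    intro w hw
    rw [inter_swap Ai W c w hc, Finset.card_insert_of_notMem
      (fun h => hcAW (Finset.mem_of_mem_erase h))]
  have hfil : (W.filter (· ∈ Ai)).card = m := by
    rw [Finset.filter_mem_eq_inter, Finset.inter_comm]
  have hsplit := Finset.card_filter_add_card_filter_not (s := W)
    (p := (· ∈ Ai))
  rw [← Finset.sum_filter_add_sum_filter_not W (· ∈ Ai)]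
  have h1 : ∑ w ∈ W.filter (· ∈ Ai), Hh ((Ai ∩ insert c (W.erase w)).card)
      = (m : ℚ) * Hh m := by
    rw [Finset.sum_congr rfl (fun w hw => ?_), Finset.sum_const, hfil, nsmul_eq_mul]
    rw [hcard w (Finset.mem_of_mem_filter w hw)]
    have hwmem : w ∈ Ai ∩ W := Finset.mem_inter.mpr
      ⟨(Finset.mem_filter.mp hw).2, (Finset.mem_filter.mp hw).1⟩
    rw [Finset.card_erase_of_mem hwmem]
    congr 1
    have : 1 ≤ m := Finset.card_pos.mpr ⟨w, hwmem⟩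
    omega
  have h2 : ∑ w ∈ W.filter (¬ · ∈ Ai), Hh ((Ai ∩ insert c (W.erase w)).card)
      = ((W.filter (¬ · ∈ Ai)).card : ℚ) * (Hh m + 1 / ((m : ℚ) + 1)) := by
    rw [Finset.sum_congr rfl (fun w hw => ?_), Finset.sum_const, nsmul_eq_mul]
    rw [hcard w (Finset.mem_of_mem_filter w hw)]
    have hwA : w ∉ Ai := (Finset.mem_filter.mp hw).2
    rw [Finset.erase_eq_of_notMem (fun h => hwA (Finset.mem_inter.mp h).1)]
    exact Hh_succ m
  rw [h1, h2]
  have hmk : m ≤ W.card := by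
    rw [hm, Finset.inter_comm]; exact Finset.card_le_card (Finset.inter_subset_left)
  have ht : ((W.filter (¬ · ∈ Ai)).card : ℚ) = (W.card : ℚ) - m := by
    have : (W.filter (¬ · ∈ Ai)).card = W.card - m := by omega
    rw [this, Nat.cast_sub hmk]
  rw [ht]
  have hm0 : (0:ℚ) < (m : ℚ) + 1 := by positivity
  field_simp
  ring

/-- Lower bound on the swap-sum for an arbitrary voter. -/
lemma sum_swap_ge {K : Type*} [DecidableEq K] (Ai W : Finset K) (c : K)
    (hcW : c ∉ W) :
    (W.card : ℚ) * Hh ((Ai ∩ W).card) - 1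
      ≤ ∑ w ∈ W, Hh ((Ai ∩ insert c (W.erase w)).card) := by
  classical
  set m := (Ai ∩ W).card with hm
  by_cases hc : c ∈ Ai
  · have hterm : ∀ w ∈ W, Hh m ≤ Hh ((Ai ∩ insert c (W.erase w)).card) := by
      intro w hw
      apply Hh_mono
      rw [inter_swap Ai W c w hc]
      have h1 : m - 1 ≤ ((Ai ∩ W).erase w).card := Finset.pred_card_le_card_erase
      have hcAW : c ∉ (Ai ∩ W).erase w := fun h =>
        hcW (Finset.mem_inter.mp (Finset.mem_of_mem_erase h)).2
      rw [Finset.card_insert_of_notMem hcAW]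
      have hle : ((Ai ∩ W).erase w).card ≤ m := Finset.card_erase_le
      omega
    calc (W.card : ℚ) * Hh m - 1 ≤ (W.card : ℚ) * Hh m := by linarith
    _ = ∑ _w ∈ W, Hh m := by rw [Finset.sum_const, nsmul_eq_mul]
    _ ≤ _ := Finset.sum_le_sum hterm
  · -- c ∉ Ai
    have hcard : ∀ w ∈ W, (Ai ∩ insert c (W.erase w)) = (Ai ∩ W).erase w :=
      fun w _ => inter_swap' Ai W c w hc
    rw [← Finset.sum_filter_add_sum_filter_not W (· ∈ Ai)]
    have hfil : (W.filter (· ∈ Ai)).card = m := by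
      rw [Finset.filter_mem_eq_inter, Finset.inter_comm]
    have hsplit := Finset.card_filter_add_card_filter_not (s := W)
      (p := (· ∈ Ai))
    have h2 : ∑ w ∈ W.filter (¬ · ∈ Ai), Hh ((Ai ∩ insert c (W.erase w)).card)
        = ((W.filter (¬ · ∈ Ai)).card : ℚ) * Hh m := by
      rw [Finset.sum_congr rfl (fun w hw => ?_), Finset.sum_const, nsmul_eq_mul]
      rw [hcard w (Finset.mem_of_mem_filter w hw)]
      have hwA : w ∉ Ai := (Finset.mem_filter.mp hw).2
      rw [Finset.erase_eq_of_notMem (fun h => hwA (Finset.mem_inter.mp h).1)]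
    have h1 : ∑ w ∈ W.filter (· ∈ Ai), Hh ((Ai ∩ insert c (W.erase w)).card)
        ≥ (m : ℚ) * Hh m - 1 := by
      rcases Nat.eq_zero_or_pos m with h0 | hpos
      · rw [h0]
        simp only [Nat.cast_zero, zero_mul, zero_sub]
        have : (0:ℚ) ≤ ∑ w ∈ W.filter (· ∈ Ai), Hh ((Ai ∩ insert c (W.erase w)).card) := by
          apply Finset.sum_nonneg
          intro w _
          unfold Hh
          apply Finset.sum_nonneg
          intro j _; positivity
        linarith
      · obtain ⟨m', hm'⟩ : ∃ m', m = m' + 1 := ⟨m - 1, by omega⟩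
        have heach : ∀ w ∈ W.filter (· ∈ Ai),
            Hh ((Ai ∩ insert c (W.erase w)).card) = Hh m' := by
          intro w hw
          rw [hcard w (Finset.mem_of_mem_filter w hw)]
          have hwmem : w ∈ Ai ∩ W := Finset.mem_inter.mpr
            ⟨(Finset.mem_filter.mp hw).2, (Finset.mem_filter.mp hw).1⟩
          rw [Finset.card_erase_of_mem hwmem]
          congr 1; omega
        rw [Finset.sum_congr rfl heach, Finset.sum_const, hfil, nsmul_eq_mul]
        have : Hh m = Hh m' + 1 / ((m' : ℚ) + 1) := by rw [hm']; exact Hh_succ m'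
        rw [this, hm']
        have hm'0 : (0:ℚ) < (m' : ℚ) + 1 := by positivity
        push_cast
        rw [ge_iff_le]
        have : ((m':ℚ) + 1) * (1 / ((m':ℚ) + 1)) = 1 := by field_simp
        nlinarith [this]
    have hcast : ((W.filter (¬ · ∈ Ai)).card : ℚ) = (W.card : ℚ) - m := by
      have hmk : m ≤ W.card := by
        rw [hm, Finset.inter_comm]; exact Finset.card_le_card Finset.inter_subset_left
      have : (W.filter (¬ · ∈ Ai)).card = W.card - m := by omega
      rw [this, Nat.cast_sub hmk]
    rw [h2, hcast]
    linarith

theorem stmt_1 {V K : Type*} [DecidableEq V] [DecidableEq K]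
    (N : Finset V) (C : Finset K) (A : V → Finset K) (k : ℕ)
    (hA : ∀ i ∈ N, A i ⊆ C) (hk : 1 ≤ k)
    (W : Finset K) (hWC : W ⊆ C) (hWcard : W.card = k)
    (ℓ : ℕ) (hℓ1 : 1 ≤ ℓ) (hℓk : ℓ ≤ k)
    (S : Finset V) (hSN : S ⊆ N)
    (hSsize : (S.card : ℚ) > (ℓ : ℚ) * (N.card : ℚ) / ((k : ℚ) + 1))
    (c : K) (hcC : c ∈ C) (hcW : c ∉ W)
    (hcS : ∀ i ∈ S, c ∈ A i)
    (hrep : ∀ i ∈ S, (A i ∩ W).card ≤ ℓ - 1) :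
    ∃ w ∈ W,
      pavscore N A (insert c (W.erase w)) ≥ pavscore N A W + 1 / (k : ℚ) ^ 2 := by
  classical
  have hWne : W.Nonempty := by
    rw [← Finset.card_pos, hWcard]; omega
  have hk0 : (0:ℚ) < (k:ℚ) := by exact_mod_cast hk
  have hℓ0 : (0:ℚ) < (ℓ:ℚ) := by exact_mod_cast hℓ1
  -- integer strengthening of the Droop bound
  have hstep : (ℓ:ℚ) * (N.card:ℚ) + 1 ≤ (S.card : ℚ) * ((k:ℚ) + 1) := by
    have h1 : (ℓ:ℚ) * (N.card:ℚ) < (S.card:ℚ) * ((k:ℚ) + 1) := by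
      rw [gt_iff_lt, div_lt_iff₀ (by positivity)] at hSsize
      linarith
    have h2 : ℓ * N.card < S.card * (k + 1) := by exact_mod_cast h1
    have h3 : ℓ * N.card + 1 ≤ S.card * (k + 1) := h2
    exact_mod_cast h3
  -- per-voter key bound
  have key : ∀ i ∈ N,
      (W.card : ℚ) * Hh ((A i ∩ W).card)
        + (if i ∈ S then ((k:ℚ) + 1) / (ℓ:ℚ) - 1 else -1)
      ≤ ∑ w ∈ W, Hh ((A i ∩ insert c (W.erase w)).card) := by
    intro i _
    by_cases hiS : i ∈ S
    · rw [if_pos hiS, sum_swap_eq (A i) W c hcW (hcS i hiS)]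
      set m := ((A i ∩ W).card : ℚ) with hm
      have hm1 : m + 1 ≤ (ℓ:ℚ) := by
        have h := hrep i hiS
        have : (A i ∩ W).card + 1 ≤ ℓ := by omega
        rw [hm]; exact_mod_cast this
      have hm0 : (0:ℚ) < m + 1 := by rw [hm]; positivity
      have hdiv : ((k:ℚ) + 1) / (ℓ:ℚ) ≤ ((k:ℚ) + 1) / (m + 1) := by
        apply div_le_div_of_nonneg_left (by positivity) hm0 hm1
      have heq : ((W.card:ℚ) - m) / (m + 1) = ((k:ℚ) + 1) / (m + 1) - 1 := by
        rw [hWcard]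
        field_simp
        ring
      rw [heq]
      linarith
    · rw [if_neg hiS]
      have := sum_swap_ge (A i) W c hcW
      linarith
  -- sum the key bound over N
  have hsum := Finset.sum_le_sum key
  rw [Finset.sum_add_distrib] at hsum
  have hswap : ∑ i ∈ N, ∑ w ∈ W, Hh ((A i ∩ insert c (W.erase w)).card)
      = ∑ w ∈ W, pavscore N A (insert c (W.erase w)) := by
    rw [Finset.sum_comm]
    exact Finset.sum_congr rfl (fun w _ => (pavscore_eq N A _).symm)
  have hmul : ∑ i ∈ N, (W.card : ℚ) * Hh ((A i ∩ W).card)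
      = (k:ℚ) * pavscore N A W := by
    rw [← Finset.mul_sum, ← pavscore_eq, hWcard]
  have hite : ∑ i ∈ N, (if i ∈ S then ((k:ℚ) + 1) / (ℓ:ℚ) - 1 else -1)
      = (S.card : ℚ) * (((k:ℚ) + 1) / (ℓ:ℚ)) - (N.card : ℚ) := by
    have : ∀ i, (if i ∈ S then ((k:ℚ) + 1) / (ℓ:ℚ) - 1 else -1)
        = (if i ∈ S then ((k:ℚ) + 1) / (ℓ:ℚ) else 0) + (-1) := by
      intro i; split <;> ring
    rw [Finset.sum_congr rfl (fun i _ => this i), Finset.sum_add_distrib,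
      Finset.sum_ite_mem, Finset.sum_const, Finset.sum_const,
      (Finset.inter_eq_right).mpr hSN]
    simp [nsmul_eq_mul]
    ring
  rw [hswap, hmul, hite] at hsum
  -- final averaging argument
  have hbound : (S.card : ℚ) * (((k:ℚ) + 1) / (ℓ:ℚ)) - (N.card : ℚ) ≥ 1 / (k:ℚ) := by
    have h1 : (S.card : ℚ) * (((k:ℚ) + 1) / (ℓ:ℚ)) = (S.card : ℚ) * ((k:ℚ) + 1) / (ℓ:ℚ) := by
      ring
    rw [ge_iff_le, h1, le_sub_iff_add_le, add_comm, le_div_iff₀ hℓ0]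
    have hℓk' : (ℓ:ℚ) ≤ (k:ℚ) := by exact_mod_cast hℓk
    have hdk : (1 / (k:ℚ)) * (ℓ:ℚ) ≤ 1 := by
      rw [div_mul_eq_mul_div, one_mul, div_le_one hk0]; exact hℓk'
    nlinarith [hstep]
  have hfinal : ∑ w ∈ W, (pavscore N A W + 1 / (k:ℚ) ^ 2)
      ≤ ∑ w ∈ W, pavscore N A (insert c (W.erase w)) := by
    rw [Finset.sum_const, hWcard, nsmul_eq_mul]
    have hkk : (k:ℚ) * (1 / (k:ℚ) ^ 2) = 1 / (k:ℚ) := by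
      field_simp
    calc (k:ℚ) * (pavscore N A W + 1 / (k:ℚ) ^ 2)
        = (k:ℚ) * pavscore N A W + 1 / (k:ℚ) := by rw [mul_add, hkk]
      _ ≤ ∑ w ∈ W, pavscore N A (insert c (W.erase w)) := by linarith
  obtain ⟨w, hwW, hw⟩ := Finset.exists_le_of_sum_le hWne hfinal
  exact ⟨w, hwW, hw⟩
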